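/- Let φ be a linear flow on ℝ^d with generator A (so φ_t = e^{tA}), let Z be a nonempty subset of the spectrum σ(A) (eigenvalues of A over ℂ), and let u : Z → ℝ. Then there exists a linear functional H on the space of linear maps ℝ^d → ℝ^d such that H(φ_t) = Σ_{z∈Z} e^{t·Re z}·u(z)·cos(t·Im z) for all t ∈ ℝ. -/

import Mathlib

open MeasureTheory Filter Set
open scoped Classical

/-- Base-`b` significand: `S_b(x) ∈ [1,b)` with `|x| = S_b(x)·b^k`; `S_b(0)=0`. -/
noncomputable def significand (b : ℕ) (x : ℝ) : ℝ :=
  if x = 0 then 0 else |x| / (b : ℝ) ^ (Int.log b |x|)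

/-- `f` is `b`-Benford. -/
noncomputable def IsBenford (b : ℕ) (f : ℝ → ℝ) : Prop :=
  ∀ s : ℝ, 1 ≤ s → s < (b : ℝ) →
    Tendsto (fun T : ℝ =>
        (volume {t : ℝ | 0 ≤ t ∧ t ≤ T ∧ significand b (f t) ≤ s}).toReal / T)
      atTop (nhds (Real.logb b s))

/-- A subset of the circle `ℝ/ℤ` is an arc if it is the image of an interval. -/
def IsArc (J : Set UnitAddCircle) : Prop :=
  ∃ a c : ℝ, J = (fun x : ℝ => (x : UnitAddCircle)) '' Set.Ico a c

/-- `f` is continuously uniformly distributed mod 1. -/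
noncomputable def CUDMod1 (f : ℝ → ℝ) : Prop :=
  ∀ J : Set UnitAddCircle, IsArc J →
    Tendsto (fun T : ℝ =>
        (volume {t : ℝ | 0 ≤ t ∧ t ≤ T ∧ ((f t : UnitAddCircle) ∈ J)}).toReal / T)
      atTop (nhds ((volume J).toReal))

/-- A sequence (indexed from 1) is uniformly distributed mod 1. -/
noncomputable def UDMod1 (x : ℕ → ℝ) : Prop :=
  ∀ J : Set UnitAddCircle, IsArc J →
    Tendsto (fun N : ℕ =>
        ((Finset.Icc 1 N).filter (fun n => ((x n : UnitAddCircle) ∈ J))).card / (N : ℝ))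
      atTop (nhds ((volume J).toReal))

/-- The set `Δ_W` associated with `W ⊆ ℂ`. -/
noncomputable def deltaSet (W : Set ℂ) : Set ℝ :=
  {x | ∃ z ∈ W, ∃ w ∈ W, x = 1 + (Complex.arg z - Complex.arg w) / (2 * Real.pi)}

/-- `W ⊆ ℂ` is `b`-nonresonant. -/
noncomputable def BNonresonant (b : ℕ) (W : Set ℂ) : Prop :=
  ∀ r : ℝ, 0 < r → (W ∩ {z | ‖z‖ = r}).Nonempty →
    (deltaSet (W ∩ {z | ‖z‖ = r}) ∩ Set.range ((↑) : ℚ → ℝ) = {1}) ∧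
    Real.logb b r ∉ Submodule.span ℚ (deltaSet (W ∩ {z | ‖z‖ = r}))

/-- `Z ⊆ ℂ` is exponentially `b`-nonresonant. -/
noncomputable def ExpBNonresonant (b : ℕ) (Z : Set ℂ) : Prop :=
  ∃ t : ℝ, 0 ≤ t ∧ BNonresonant b ((fun z => Complex.exp (t * z)) '' Z)

/-- The spectrum (set of complex eigenvalues) of a real square matrix. -/
noncomputable def realSpectrum {d : ℕ} (A : Matrix (Fin d) (Fin d) ℝ) : Set ℂ :=
  spectrum ℂ (A.map (algebraMap ℝ ℂ))


section AuxObservable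

open NormedSpace Matrix

attribute [local instance] Matrix.linftyOpNormedAddCommGroup Matrix.linftyOpNormedRing
  Matrix.linftyOpNormedAlgebra

private theorem mulVec_exp_eigen {d : ℕ} (B : Matrix (Fin d) (Fin d) ℂ) (v : Fin d → ℂ) (z : ℂ)
    (hv : B *ᵥ v = z • v) : NormedSpace.exp B *ᵥ v = Complex.exp z • v := by
  have hpow : ∀ n : ℕ, B ^ n *ᵥ v = z ^ n • v := by
    intro n
    induction n with
    | zero => simp
    | succ n ih =>
      rw [pow_succ', ← Matrix.mulVec_mulVec, ih, Matrix.mulVec_smul, hv,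
        smul_smul, ← pow_succ]
  let L : Matrix (Fin d) (Fin d) ℂ →L[ℂ] (Fin d → ℂ) :=
    LinearMap.toContinuousLinearMap
      { toFun := fun M => M *ᵥ v
        map_add' := fun M N => Matrix.add_mulVec M N v
        map_smul' := fun c M => Matrix.smul_mulVec c M v }
  have hL : ∀ M, L M = M *ᵥ v := fun _ => rfl
  have hsum := NormedSpace.expSeries_summable' (𝕂 := ℂ) B
  calc NormedSpace.exp B *ᵥ v = L (∑' n : ℕ, ((n.factorial : ℂ))⁻¹ • B ^ n) := by
        rw [hL, NormedSpace.exp_eq_tsum (𝕂 := ℂ)]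
    _ = ∑' n : ℕ, (((n.factorial : ℂ))⁻¹ * z ^ n) • v := by
        rw [L.map_tsum hsum]
        congr 1; ext n
        rw [hL, Matrix.smul_mulVec, hpow, smul_smul]
    _ = (∑' n : ℕ, ((n.factorial : ℂ))⁻¹ • z ^ n) • v := by
        rw [← (NormedSpace.expSeries_summable' (𝕂 := ℂ) z).tsum_smul_const]
        simp [smul_eq_mul]
    _ = Complex.exp z • v := by
        rw [Complex.exp_eq_exp_ℂ]; congr 1
        exact (congrFun (NormedSpace.exp_eq_tsum (𝕂 := ℂ)) z).symm

private theorem exists_eigenvector {d : ℕ} (A : Matrix (Fin d) (Fin d) ℝ) (z : ℂ)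
    (hz : z ∈ realSpectrum A) :
    ∃ v : Fin d → ℂ, v ≠ 0 ∧ (A.map (algebraMap ℝ ℂ)) *ᵥ v = z • v := by
  set B := A.map (algebraMap ℝ ℂ) with hB
  rw [realSpectrum, spectrum.mem_iff, Matrix.isUnit_iff_isUnit_det, isUnit_iff_ne_zero,
    not_not] at hz
  obtain ⟨v, hv0, hv⟩ := Matrix.exists_mulVec_eq_zero_iff.mpr hz
  refine ⟨v, hv0, ?_⟩
  have h1 : (algebraMap ℂ (Matrix (Fin d) (Fin d) ℂ) z - B) *ᵥ v = 0 := hv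
  have h2 : algebraMap ℂ (Matrix (Fin d) (Fin d) ℂ) z = z • (1 : Matrix (Fin d) (Fin d) ℂ) := by
    rw [Algebra.algebraMap_eq_smul_one]
  rw [Matrix.sub_mulVec, sub_eq_zero, h2,
    Matrix.smul_mulVec, Matrix.one_mulVec] at h1
  exact h1.symm

private theorem exp_map_complex {d : ℕ} (A : Matrix (Fin d) (Fin d) ℝ) (t : ℝ) :
    (exp (t • A)).map (algebraMap ℝ ℂ) = exp ((t : ℂ) • A.map (algebraMap ℝ ℂ)) := by
  have hcont : Continuous fun M : Matrix (Fin d) (Fin d) ℝ => M.map (algebraMap ℝ ℂ) :=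
    continuous_id.matrix_map Complex.continuous_ofReal
  let f : Matrix (Fin d) (Fin d) ℝ →ₐ[ℝ] Matrix (Fin d) (Fin d) ℂ :=
    (Algebra.ofId ℝ ℂ).mapMatrix
  have h1 := NormedSpace.map_exp f hcont (t • A)
  have h2 : f (t • A)
      = (t : ℂ) • A.map (algebraMap ℝ ℂ) := by
    rw [_root_.map_smul]
    ext i j
    simp [f, Algebra.ofId, AlgHom.mapMatrix, Matrix.map_apply, Complex.real_smul]
  calc (exp (t • A)).map (algebraMap ℝ ℂ) = f (exp (t • A)) := rfl
    _ = exp (f (t • A)) := h1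
    _ = exp ((t : ℂ) • A.map (algebraMap ℝ ℂ)) := by rw [h2]

private theorem key_observable {d : ℕ} (A : Matrix (Fin d) (Fin d) ℝ) (z : ℂ)
    (hz : z ∈ realSpectrum A) :
    ∃ H : Matrix (Fin d) (Fin d) ℝ →ₗ[ℝ] ℝ, ∀ t : ℝ,
      H (NormedSpace.exp (t • A)) = Real.exp (t * z.re) * Real.cos (t * z.im) := by
  obtain ⟨v, hv0, hv⟩ := exists_eigenvector A z hz
  obtain ⟨i, hvi⟩ := Function.ne_iff.mp hv0
  have hvi : v i ≠ 0 := hvi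
  refine ⟨{ toFun := fun M => ∑ j, M i j * ((v j / v i).re)
            map_add' := fun M N => by
              simp [Matrix.add_apply, add_mul, Finset.sum_add_distrib]
            map_smul' := fun c M => by
              simp [Matrix.smul_apply, Finset.mul_sum, mul_assoc] }, fun t => ?_⟩
  simp only [LinearMap.coe_mk, AddHom.coe_mk]
  set E := NormedSpace.exp (t • A) with hE
  have heig : ((t : ℂ) • A.map (algebraMap ℝ ℂ)) *ᵥ v = ((t : ℂ) * z) • v := by
    rw [Matrix.smul_mulVec, hv, smul_smul]
  have hEv : E.map (algebraMap ℝ ℂ) *ᵥ v = Complex.exp ((t : ℂ) * z) • v := by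
    rw [hE, exp_map_complex, mulVec_exp_eigen _ v _ heig]
  have hEi : (∑ j, (E i j : ℂ) * v j) = Complex.exp ((t : ℂ) * z) * v i := by
    have := congrFun hEv i
    simpa [Matrix.mulVec, dotProduct, Matrix.map_apply] using this
  have hstep : ∑ j, E i j * ((v j / v i).re)
      = ((∑ j, (E i j : ℂ) * v j) / v i).re := by
    rw [Finset.sum_div, Complex.re_sum]
    refine Finset.sum_congr rfl fun j _ => ?_
    rw [mul_div_assoc, Complex.re_ofReal_mul]
  rw [hstep, hEi, mul_div_cancel_right₀ _ hvi, Complex.exp_re]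
  simp [Complex.mul_re, Complex.mul_im]

end AuxObservable

/-- realization of prescribed exponential-trigonometric signals by a
linear observable of a linear flow. -/
theorem exists_observable_realizing_signal (d : ℕ) (A : Matrix (Fin d) (Fin d) ℝ)
    (Z : Finset ℂ) (hZ : (Z : Set ℂ) ⊆ realSpectrum A) (hne : Z.Nonempty) (u : ℂ → ℝ) :
    ∃ H : Matrix (Fin d) (Fin d) ℝ →ₗ[ℝ] ℝ, ∀ t : ℝ,
      H (NormedSpace.exp (t • A)) =
        ∑ z ∈ Z, Real.exp (t * z.re) * u z * Real.cos (t * z.im) := by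
  choose H hH using fun z : {x // x ∈ Z} =>
    key_observable A z.1 (hZ (Finset.mem_coe.mpr z.2))
  refine ⟨∑ z ∈ Z.attach, u z.1 • H z, fun t => ?_⟩
  rw [← Finset.sum_attach Z fun z => Real.exp (t * z.re) * u z * Real.cos (t * z.im)]
  simp only [LinearMap.coe_sum, Finset.sum_apply, LinearMap.smul_apply, smul_eq_mul, hH]
  exact Finset.sum_congr rfl fun z _ => by ring
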